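/- Let n ≥ 3 and A, B, C, D integers with A and D odd, and set Δ = AC − B². If Δ ≡ 1 or 5 (mod 8), then the equation Ax² + 2Bxy + Cy² ≡ D (mod 2ⁿ) has exactly 2^(n+1) solutions in (ℤ/2ⁿℤ)² if AD ≡ 1 or 5 (mod 8), and no solutions otherwise. -/

import Mathlib

open Finset

namespace CountQF

def cnt (δ m : ℤ) (k : ℕ) : ℕ :=
  (Finset.univ.filter (fun p : ZMod (2^k) × ZMod (2^k) =>
    p.1^2 + (δ : ZMod (2^k)) * p.2^2 = (m : ZMod (2^k)))).card

variable (j : ℕ)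

abbrev Zb := ZMod (2^(j+4))
abbrev Wb := ZMod (2^(j+3))

def pi : Zb j →+* Wb j := ZMod.castHom (show (2:ℕ)^(j+3) ∣ 2^(j+4) from pow_dvd_pow 2 (by omega)) _

def L (w : Wb j) : Zb j := ((w.val : ℕ) : Zb j)

/-- N = 2^(j+3) as an element of Zb j -/
def NN : Zb j := ((2^(j+3) : ℕ) : Zb j)

lemma pi_L (w : Wb j) : pi j (L j w) = w := by
  rw [L, map_natCast]
  exact ZMod.natCast_rightInverse w

lemma NN_ne_zero : NN j ≠ 0 := by
  rw [NN, Ne, ZMod.natCast_eq_zero_iff]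
  intro h
  have h1 : (2:ℕ)^(j+3) ≠ 0 := by positivity
  have := Nat.le_of_dvd (Nat.pos_of_ne_zero h1) h
  have h2 : (2:ℕ)^(j+4) = 2 * 2^(j+3) := by ring
  omega

lemma ker_pi (z : Zb j) : pi j z = 0 ↔ z = 0 ∨ z = NN j := by
  constructor
  · intro h
    have hz : ((z.val : ℕ) : Zb j) = z := ZMod.natCast_rightInverse z
    have hπ : pi j z = ((z.val : ℕ) : Wb j) := by rw [← hz, map_natCast, hz]
    rw [hπ, ZMod.natCast_eq_zero_iff] at h
    obtain ⟨c, hc⟩ := h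
    have hlt : z.val < 2^(j+4) := ZMod.val_lt z
    have h2 : (2:ℕ)^(j+4) = 2 * 2^(j+3) := by ring
    have h3 : (2:ℕ)^(j+3) ≠ 0 := by positivity
    have hc2 : c < 2 := by
      by_contra hcc
      push_neg at hcc
      have := Nat.mul_le_mul_left (2^(j+3)) hcc
      omega
    interval_cases c
    · left; rw [← hz, hc]; simp
    · right; rw [← hz, hc, NN]; norm_num
  · rintro (rfl | rfl)
    · simp
    · rw [NN, map_natCast, ZMod.natCast_eq_zero_iff]

lemma decomp (u : Zb j) : ∃ t : Zb j, u = L j (pi j u) + NN j * t := by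
  refine ⟨((u.val / 2^(j+3) : ℕ) : Zb j), ?_⟩
  have hz : ((u.val : ℕ) : Zb j) = u := ZMod.natCast_rightInverse u
  have hπ : pi j u = ((u.val : ℕ) : Wb j) := by rw [← hz, map_natCast, hz]
  rw [hπ, L, ZMod.val_natCast, NN]
  conv_lhs => rw [← hz]
  have key : u.val = u.val % 2^(j+3) + 2^(j+3) * (u.val / 2^(j+3)) := (Nat.mod_add_div _ _).symm
  conv_lhs => rw [key]
  push_cast
  ring

lemma two_NN : (2 : Zb j) * NN j = 0 := by
  have h0 : ((2^(j+4) : ℕ) : Zb j) = 0 := ZMod.natCast_self _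
  rw [NN]
  push_cast at h0 ⊢
  rw [show (2:Zb j) * 2^(j+3) = 2^(j+4) by ring, h0]

lemma NN_sq : NN j ^ 2 = 0 := by
  have h0 : ((2^(j+4) : ℕ) : Zb j) = 0 := ZMod.natCast_self _
  rw [NN]
  push_cast at h0 ⊢
  rw [show ((2:Zb j)^(j+3))^2 = 2^(j+4) * 2^(j+2) by ring, h0, zero_mul]

def rho2 : Zb j →+* ZMod 2 := ZMod.castHom (dvd_pow_self 2 (by omega)) _

def rhoW : Wb j →+* ZMod 2 := ZMod.castHom (dvd_pow_self 2 (by omega)) _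

lemma rho_L (w : Wb j) : rho2 j (L j w) = rhoW j w := by
  have hz : ((w.val : ℕ) : Wb j) = w := ZMod.natCast_rightInverse w
  rw [L, rho2, map_natCast]
  conv_rhs => rw [← hz]
  rw [rhoW, map_natCast]

lemma NN_mul (x : Zb j) (hx : rho2 j x = 1) : NN j * x = NN j := by
  have hz : ((x.val : ℕ) : Zb j) = x := ZMod.natCast_rightInverse x
  rw [← hz, rho2, map_natCast] at hx
  have hv := congrArg ZMod.val hx
  rw [ZMod.val_natCast] at hv
  have hodd : x.val % 2 = 1 := hv
  obtain ⟨r, hr⟩ : ∃ r, x.val = 2 * r + 1 := ⟨x.val / 2, by omega⟩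
  have h0 : ((2^(j+4) : ℕ) : Zb j) = 0 := ZMod.natCast_self _
  rw [← hz, hr, NN]
  push_cast at h0 ⊢
  linear_combination (r : Zb j) * h0


/-- H = 2^(j+2) in Zb -/
def Hz : Zb j := ((2^(j+2) : ℕ) : Zb j)
/-- H = 2^(j+2) in Wb -/
def Hw : Wb j := ((2^(j+2) : ℕ) : Wb j)

lemma two_Hz : (2 : Zb j) * Hz j = NN j := by
  rw [Hz, NN]; push_cast; ring

lemma Hz_sq : Hz j ^ 2 = 0 := by
  have h0 : ((2^(j+4) : ℕ) : Zb j) = 0 := ZMod.natCast_self _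
  rw [Hz]
  push_cast at h0 ⊢
  rw [show ((2:Zb j)^(j+2))^2 = 2^(j+4) * 2^j by ring, h0, zero_mul]

lemma L_shift (w : Wb j) :
    ∃ s : Zb j, L j (w + Hw j) = L j w + Hz j + NN j * s := by
  have hker : pi j (L j (w + Hw j) - (L j w + Hz j)) = 0 := by
    rw [map_sub, map_add, pi_L, pi_L, Hz, map_natCast, Hw]
    ring
  rcases (ker_pi j _).1 hker with h | h
  · exact ⟨0, by rw [mul_zero, add_zero, ← sub_eq_zero]; exact h⟩
  · exact ⟨1, by rw [mul_one, add_assoc, ← sub_eq_iff_eq_add']; linear_combination h⟩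

lemma rhoW_Hw (w : Wb j) : rhoW j (w + Hw j) = rhoW j w := by
  rw [map_add, Hw, map_natCast, show (((2:ℕ)^(j+2) : ℕ) : ZMod 2) = 0 from
    (ZMod.natCast_eq_zero_iff _ _).2 (dvd_pow_self 2 (by omega)), add_zero]

lemma Hw_Hw (w : Wb j) : w + Hw j + Hw j = w := by
  have h0 : ((2^(j+3) : ℕ) : Wb j) = 0 := ZMod.natCast_self _
  rw [Hw]
  push_cast at h0 ⊢
  linear_combination h0

/-- the involution swapping the two halves -/
def sig (q : Wb j × Wb j) : Wb j × Wb j :=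
  if rhoW j q.1 = 1 then (q.1 + Hw j, q.2) else (q.1, q.2 + Hw j)

lemma sig_sig (q : Wb j × Wb j) : sig j (sig j q) = q := by
  rw [sig, sig]
  by_cases h : rhoW j q.1 = 1
  · simp only [h, if_pos, rhoW_Hw, if_pos h, Hw_Hw]
  · simp only [h, if_neg, ite_false, Hw_Hw]

/-- the diagonal quadratic form on lifts -/
def fL (δ : ℤ) (q : Wb j × Wb j) : Zb j := (L j q.1)^2 + (δ : Zb j) * (L j q.2)^2

lemma parity (δ m : ℤ) (hδ : Odd δ) (hm : Odd m) (q : Wb j × Wb j)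
    (h : fL j δ q = (m : Zb j) ∨ fL j δ q = (m : Zb j) + NN j) :
    (rhoW j q.1 = 1 ∧ rhoW j q.2 = 0) ∨ (rhoW j q.1 = 0 ∧ rhoW j q.2 = 1) := by
  have hδ2 : ((δ : ℤ) : ZMod 2) = 1 := by
    obtain ⟨t, rfl⟩ := hδ; push_cast; ring_nf
    rw [show ((2:ZMod 2)) = 0 from rfl]; ring
  have hm2 : ((m : ℤ) : ZMod 2) = 1 := by
    obtain ⟨t, rfl⟩ := hm; push_cast; ring_nf
    rw [show ((2:ZMod 2)) = 0 from rfl]; ring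
  have hN2 : rho2 j (NN j) = 0 := by
    rw [NN, rho2, map_natCast]
    exact (ZMod.natCast_eq_zero_iff _ _).2 (dvd_pow_self 2 (by omega))
  have key : (rhoW j q.1)^2 + (rhoW j q.2)^2 = 1 := by
    rcases h with h | h <;>
      [skip; skip] <;>
      (have h2 := congrArg (rho2 j) h;
       rw [fL, map_add, map_mul, map_pow, map_pow, map_intCast, rho_L, rho_L, hδ2, one_mul] at h2)
    · rw [map_intCast, hm2] at h2; exact h2
    · rw [map_add, map_intCast, hm2, hN2, add_zero] at h2; exact h2
  revert key
  generalize rhoW j q.1 = a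
  generalize rhoW j q.2 = b
  revert a b
  decide


lemma sig_shift (δ : ℤ) (hδ : Odd δ) (q : Wb j × Wb j)
    (hpar : (rhoW j q.1 = 1 ∧ rhoW j q.2 = 0) ∨ (rhoW j q.1 = 0 ∧ rhoW j q.2 = 1)) :
    fL j δ (sig j q) = fL j δ q + NN j := by
  have h2N := two_NN j
  have hN2 := NN_sq j
  have h2H := two_Hz j
  have hH2 := Hz_sq j
  by_cases h1 : rhoW j q.1 = 1
  · -- shift the first coordinate
    obtain ⟨s, hs⟩ := L_shift j q.1
    have hodd : NN j * L j q.1 = NN j := NN_mul j _ (by rw [rho_L]; exact h1)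
    rw [sig, if_pos h1, fL, fL]
    simp only
    rw [hs]
    linear_combination (L j q.1 * s + Hz j * s) * h2N + s^2 * hN2 + (L j q.1) * h2H + hH2 + hodd
  · -- first coordinate even, so second is odd
    have h2 : rhoW j q.2 = 1 := by
      rcases hpar with ⟨ha, _⟩ | ⟨_, hb⟩
      exacts [absurd ha h1, hb]
    obtain ⟨s, hs⟩ := L_shift j q.2
    have hodd : NN j * ((δ : Zb j) * L j q.2) = NN j := by
      apply NN_mul
      rw [map_mul, rho_L, h2, mul_one, map_intCast]
      obtain ⟨t, rfl⟩ := hδ; push_cast; ring_nf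
      rw [show ((2:ZMod 2)) = 0 from rfl]; ring
    rw [sig, if_neg h1, fL, fL]
    simp only
    rw [hs]
    linear_combination ((δ:Zb j) * L j q.2 * s + (δ:Zb j) * Hz j * s) * h2N
      + (δ:Zb j) * s^2 * hN2 + ((δ:Zb j) * L j q.2) * h2H + (δ:Zb j) * hH2 + hodd


lemma pi_NN : pi j (NN j) = 0 := by
  rw [NN, map_natCast]
  exact (ZMod.natCast_eq_zero_iff _ _).2 dvd_rfl

lemma fiber_card (w : Wb j) : (univ.filter (fun z : Zb j => pi j z = w)).card = 2 := by
  have hset : univ.filter (fun z : Zb j => pi j z = w) = {L j w, L j w + NN j} := by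
    ext z
    simp only [mem_filter, mem_univ, true_and, mem_insert, mem_singleton]
    constructor
    · intro h
      have h0 : pi j (z - L j w) = 0 := by rw [map_sub, pi_L, h, sub_self]
      rcases (ker_pi j _).1 h0 with h' | h'
      · left; linear_combination h'
      · right; linear_combination h'
    · rintro (rfl | rfl)
      · exact pi_L j w
      · rw [map_add, pi_L, pi_NN, add_zero]
  rw [hset, Finset.card_insert_of_notMem, Finset.card_singleton]
  rw [Finset.mem_singleton]
  intro h
  exact NN_ne_zero j (by linear_combination h.symm)

def SG (δ m : ℤ) : Finset (Wb j × Wb j) := univ.filter (fun q => fL j δ q = (m : Zb j))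

def SG' (δ m : ℤ) : Finset (Wb j × Wb j) :=
  univ.filter (fun q => fL j δ q = (m : Zb j) + NN j)

lemma stepA (δ m : ℤ) : cnt δ m (j+3) = (SG j δ m).card + (SG' j δ m).card := by
  have hiff : ∀ q : Wb j × Wb j,
      (q.1^2 + (δ : Wb j) * q.2^2 = (m : Wb j)) ↔
      (fL j δ q = (m : Zb j) ∨ fL j δ q = (m : Zb j) + NN j) := by
    intro q
    have hπf : pi j (fL j δ q) = q.1^2 + (δ : Wb j) * q.2^2 := by
      rw [fL, map_add, map_mul, map_pow, map_pow, pi_L, pi_L, map_intCast]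
    constructor
    · intro h
      have h0 : pi j (fL j δ q - (m : Zb j)) = 0 := by
        rw [map_sub, hπf, h, map_intCast, sub_self]
      rcases (ker_pi j _).1 h0 with h' | h'
      · left; linear_combination h'
      · right; linear_combination h'
    · rintro (h | h)
      · rw [← hπf, h, map_intCast]
      · rw [← hπf, h, map_add, map_intCast, pi_NN, add_zero]
  rw [cnt, filter_congr (fun q _ => hiff q), filter_or, card_union_of_disjoint, SG, SG']
  rw [Finset.disjoint_left]
  intro q hq hq'
  rw [mem_filter] at hq hq'
  exact NN_ne_zero j (by linear_combination hq.2 - hq'.2)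

lemma stepB (δ m : ℤ) (hδ : Odd δ) (hm : Odd m) :
    (SG j δ m).card = (SG' j δ m).card := by
  apply Finset.card_nbij' (sig j) (sig j)
  · intro q hq
    rw [mem_coe, SG, mem_filter] at hq
    rw [mem_coe, SG', mem_filter]
    refine ⟨mem_univ _, ?_⟩
    rw [sig_shift j δ hδ q (parity j δ m hδ hm q (Or.inl hq.2)), hq.2]
  · intro q hq
    rw [mem_coe, SG', mem_filter] at hq
    rw [mem_coe, SG, mem_filter]
    refine ⟨mem_univ _, ?_⟩
    rw [sig_shift j δ hδ q (parity j δ m hδ hm q (Or.inr hq.2)), hq.2]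
    linear_combination two_NN j
  · intro q _; exact sig_sig j q
  · intro q _; exact sig_sig j q

lemma stepC (δ m : ℤ) : cnt δ m (j+4) = 4 * (SG j δ m).card := by
  have hinv : ∀ p : Zb j × Zb j,
      (p.1^2 + (δ : Zb j) * p.2^2 = (m : Zb j)) ↔
      fL j δ (pi j p.1, pi j p.2) = (m : Zb j) := by
    intro p
    have key : p.1^2 + (δ : Zb j) * p.2^2 = fL j δ (pi j p.1, pi j p.2) := by
      obtain ⟨t1, h1⟩ := decomp j p.1
      obtain ⟨t2, h2⟩ := decomp j p.2
      rw [fL]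
      conv_lhs => rw [h1, h2]
      linear_combination (L j (pi j p.1) * t1 + (δ : Zb j) * L j (pi j p.2) * t2) * two_NN j
        + (t1^2 + (δ : Zb j) * t2^2) * NN_sq j
    rw [key]
  rw [cnt, filter_congr (fun p _ => hinv p)]
  rw [Finset.card_eq_sum_card_fiberwise
    (f := fun p : Zb j × Zb j => (pi j p.1, pi j p.2)) (t := SG j δ m)
    (fun p hp => by rw [mem_coe, SG, mem_filter]; exact ⟨mem_univ _, (mem_filter.1 (mem_coe.1 hp)).2⟩)]
  have hfib : ∀ q ∈ SG j δ m,
      ((univ.filter (fun p : Zb j × Zb j => fL j δ (pi j p.1, pi j p.2) = (m : Zb j))).filter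
        (fun p => (pi j p.1, pi j p.2) = q)).card = 4 := by
    intro q hq
    rw [SG, mem_filter] at hq
    have hset : ((univ.filter (fun p : Zb j × Zb j => fL j δ (pi j p.1, pi j p.2) = (m : Zb j))).filter
        (fun p => (pi j p.1, pi j p.2) = q))
        = univ.filter (fun p : Zb j × Zb j => pi j p.1 = q.1 ∧ pi j p.2 = q.2) := by
      rw [Finset.filter_filter]
      ext p
      simp only [mem_filter, mem_univ, true_and]
      constructor
      · rintro ⟨_, hΦ⟩
        exact ⟨congrArg Prod.fst hΦ, congrArg Prod.snd hΦ⟩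
      · rintro ⟨ha, hb⟩
        have hΦ : (pi j p.1, pi j p.2) = q := by rw [ha, hb]
        exact ⟨by rw [hΦ]; exact hq.2, hΦ⟩
    rw [hset, ← Finset.univ_product_univ,
      Finset.filter_product (fun z : Zb j => pi j z = q.1) (fun z : Zb j => pi j z = q.2),
      Finset.card_product, fiber_card, fiber_card]
  rw [Finset.sum_congr rfl hfib, Finset.sum_const, smul_eq_mul, mul_comm]

lemma step' (δ m : ℤ) (hδ : Odd δ) (hm : Odd m) :
    cnt δ m (j + 4) = 2 * cnt δ m (j + 3) := by
  have hA := stepA j δ m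
  have hB := stepB j δ m hδ hm
  have hC := stepC j δ m
  omega


lemma base (δ m : ℤ) (hδ : δ % 8 = 1 ∨ δ % 8 = 5) (hm : m % 8 = 1 ∨ m % 8 = 5) :
    cnt δ m 3 = 2 ^ 4 := by
  have hcast : ∀ (a : ℤ), ((a : ZMod (2^3)) : ZMod (2^3)) = ((a % 8 : ℤ) : ZMod (2^3)) := by
    intro a
    rw [ZMod.intCast_eq_intCast_iff]
    have : ((2^3 : ℕ) : ℤ) = 8 := by norm_num
    rw [Int.ModEq, this, Int.emod_emod_of_dvd _ dvd_rfl]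
  have h1 : (δ : ZMod (2^3)) = ((δ % 8 : ℤ) : ZMod (2^3)) := hcast δ
  have h2 : (m : ZMod (2^3)) = ((m % 8 : ℤ) : ZMod (2^3)) := hcast m
  unfold cnt
  rw [h1, h2]
  rcases hδ with h | h <;> rcases hm with h' | h' <;> rw [h, h'] <;> decide

lemma cnt_eq (n : ℕ) (hn : 3 ≤ n) (δ m : ℤ) (hδ : δ % 8 = 1 ∨ δ % 8 = 5)
    (hm : m % 8 = 1 ∨ m % 8 = 5) : cnt δ m n = 2 ^ (n + 1) := by
  have hδo : Odd δ := by
    rcases hδ with h | h <;> exact Int.odd_iff.2 (by omega)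
  have hmo : Odd m := by
    rcases hm with h | h <;> exact Int.odd_iff.2 (by omega)
  induction n, hn using Nat.le_induction with
  | base => exact base δ m hδ hm
  | succ k hk ih =>
    obtain ⟨j, rfl⟩ : ∃ j, k = j + 3 := ⟨k - 3, by omega⟩
    rw [show j + 3 + 1 = j + 4 from rfl, step' j δ m hδo hmo, ih]
    ring

end CountQF

theorem count_quadratic_disc_one_five (n : ℕ) (hn : 3 ≤ n) (A B C D : ℤ)
    (hA : Odd A) (hD : Odd D)
    (hΔ : (A * C - B ^ 2) % 8 = 1 ∨ (A * C - B ^ 2) % 8 = 5) :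
    Nat.card {xy : ZMod (2 ^ n) × ZMod (2 ^ n) //
        (A : ZMod (2 ^ n)) * xy.1 ^ 2 + 2 * (B : ZMod (2 ^ n)) * xy.1 * xy.2
          + (C : ZMod (2 ^ n)) * xy.2 ^ 2 = (D : ZMod (2 ^ n))} =
      if A * D % 8 = 1 ∨ A * D % 8 = 5 then 2 ^ (n + 1) else 0 := by
  obtain ⟨t, ht⟩ := hA
  have hcop : IsCoprime (A : ℤ) ((2:ℤ)^n) :=
    IsCoprime.pow_right ⟨1, -t, by rw [ht]; ring⟩
  obtain ⟨u, v, huv⟩ := hcop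
  have h2z : ((2 : ZMod (2^n)))^n = 0 := by
    have := ZMod.natCast_self (2^n)
    push_cast at this
    exact this
  have hA' : (A : ZMod (2^n)) * (u : ZMod (2^n)) = 1 := by
    have hc := congrArg (fun z : ℤ => (z : ZMod (2^n))) huv
    push_cast at hc
    linear_combination hc - (v : ZMod (2^n)) * h2z
  have hNcard : Nat.card {xy : ZMod (2 ^ n) × ZMod (2 ^ n) //
        (A : ZMod (2 ^ n)) * xy.1 ^ 2 + 2 * (B : ZMod (2 ^ n)) * xy.1 * xy.2
          + (C : ZMod (2 ^ n)) * xy.2 ^ 2 = (D : ZMod (2 ^ n))} = CountQF.cnt (A*C - B^2) (A*D) n := by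
    have e : {xy : ZMod (2 ^ n) × ZMod (2 ^ n) //
        (A : ZMod (2 ^ n)) * xy.1 ^ 2 + 2 * (B : ZMod (2 ^ n)) * xy.1 * xy.2
          + (C : ZMod (2 ^ n)) * xy.2 ^ 2 = (D : ZMod (2 ^ n))} ≃
        {p : ZMod (2^n) × ZMod (2^n) //
          p.1^2 + ((A*C - B^2 : ℤ) : ZMod (2^n)) * p.2^2 = ((A*D : ℤ) : ZMod (2^n))} := by
      refine ⟨fun p => ⟨((A : ZMod (2^n)) * p.1.1 + (B : ZMod (2^n)) * p.1.2, p.1.2), ?_⟩,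
        fun q => ⟨((u : ZMod (2^n)) * (q.1.1 - (B : ZMod (2^n)) * q.1.2), q.1.2), ?_⟩, ?_, ?_⟩
      · have h := p.2
        push_cast
        linear_combination (A : ZMod (2^n)) * h
      · have h := q.2
        push_cast at h ⊢
        linear_combination (u : ZMod (2^n)) * h +
          ((D : ZMod (2^n)) - (C : ZMod (2^n)) * q.1.2^2 +
            (u : ZMod (2^n)) * (q.1.1 - (B : ZMod (2^n)) * q.1.2)^2) * hA'
      · intro p
        apply Subtype.ext
        apply Prod.ext
        · show (u : ZMod (2^n)) * ((A : ZMod (2^n)) * p.1.1 + (B : ZMod (2^n)) * p.1.2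
            - (B : ZMod (2^n)) * p.1.2) = p.1.1
          linear_combination p.1.1 * hA'
        · rfl
      · intro q
        apply Subtype.ext
        apply Prod.ext
        · show (A : ZMod (2^n)) * ((u : ZMod (2^n)) * (q.1.1 - (B : ZMod (2^n)) * q.1.2))
            + (B : ZMod (2^n)) * q.1.2 = q.1.1
          linear_combination (q.1.1 - (B : ZMod (2^n)) * q.1.2) * hA'
        · rfl
    rw [Nat.card_congr e, Nat.card_eq_fintype_card, Fintype.card_subtype]
    rfl
  rw [hNcard]
  by_cases hAD : A * D % 8 = 1 ∨ A * D % 8 = 5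
  · rw [if_pos hAD]
    exact CountQF.cnt_eq n hn _ _ hΔ hAD
  · rw [if_neg hAD]
    have hADodd : (A * D) % 2 = 1 := Int.odd_iff.1 (Odd.mul ⟨t, ht⟩ hD)
    have h28 : A * D % 8 % 2 = A * D % 2 := Int.emod_emod_of_dvd _ (by norm_num)
    have h8 : A * D % 8 = 3 ∨ A * D % 8 = 7 := by omega
    rw [CountQF.cnt, Finset.card_eq_zero, Finset.filter_eq_empty_iff]
    intro p _
    intro h
    have ρ8 : ZMod (2^n) →+* ZMod 8 :=
      ZMod.castHom (show (8:ℕ) ∣ 2^n by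
        calc (8:ℕ) = 2^3 := by norm_num
        _ ∣ 2^n := pow_dvd_pow 2 hn) (ZMod 8)
    have hc := congrArg ρ8 h
    rw [map_add, map_mul, map_pow, map_pow, map_intCast, map_intCast] at hc
    have hcast8 : ∀ a : ℤ, ((a : ℤ) : ZMod 8) = ((a % 8 : ℤ) : ZMod 8) := by
      intro a
      rw [ZMod.intCast_eq_intCast_iff]
      have h8' : ((8 : ℕ) : ℤ) = 8 := by norm_num
      rw [Int.ModEq, h8', Int.emod_emod_of_dvd _ dvd_rfl]
    rw [hcast8 (A*C - B^2), hcast8 (A*D)] at hc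
    have key : ∀ (d' m' : ZMod 8), (d' = 1 ∨ d' = 5) → (m' = 3 ∨ m' = 7) →
        ∀ a b : ZMod 8, a^2 + d'*b^2 ≠ m' := by decide
    refine key _ _ ?_ ?_ _ _ hc
    · rcases hΔ with h' | h'
      · left; rw [h']; norm_num
      · right; rw [h']; norm_num
    · rcases h8 with h' | h'
      · left; rw [h']; norm_num
      · right; rw [h']; norm_num
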